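/- The class of languages accepted by quasi-deterministic sensing 5'→3' WK automata is a proper subset of the class of languages accepted by (nondeterministic) sensing 5'→3' WK automata; in particular, the language L = { aⁿbⁿ : n ≥ 0 } ∪ { aⁿb²ⁿ : n ≥ 0 } over {a,b} is accepted by a sensing 5'→3' WK automaton but by no quasi-deterministic sensing 5'→3' WK automaton. -/

import Mathlib

open Computability

/-- The two-letter alphabet `{a, b}`. -/
inductive Letter : Type
  | a : Letter
  | b : Letter
deriving DecidableEq

instance instFintypeLetter : Fintype Letter :=
  ⟨{Letter.a, Letter.b}, fun x => by cases x <;> simp⟩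

open Letter

/-- A sensing 5'→3' Watson-Crick automaton over the alphabet `T` with state set `Q`:
an initial state `q0`, a set `F` of final states, and a transition mapping
`δ : Q × T* × T* → 2^Q` that is nonempty for only finitely many triples. -/
structure WKAutomaton (T : Type) (Q : Type) where
  q0 : Q
  F : Set Q
  δ : Q → List T → List T → Set Q
  finite_delta : {t : Q × List T × List T | (δ t.1 t.2.1 t.2.2).Nonempty}.Finite

namespace WKAutomaton

variable {T Q : Type}

/-- One computation step on configurations:
`(q, x ++ w' ++ y) ⇒ (q', w')` iff `q' ∈ δ q x y`. -/
def Step (A : WKAutomaton T Q) (c c' : Q × List T) : Prop :=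
  ∃ x y : List T, c.2 = x ++ c'.2 ++ y ∧ c'.1 ∈ A.δ c.1 x y

/-- The accepted language: words `w` with `(q₀, w) ⇒* (q_F, λ)` for some final `q_F`. -/
def Lang (A : WKAutomaton T Q) : Set (List T) :=
  {w | ∃ qf ∈ A.F, Relation.ReflTransGen A.Step (A.q0, w) (qf, [])}

/-- `A` is deterministic: in every configuration at most one computation step
(choice of `x`, `y`, `w'`, `q'`) is applicable. -/
def Deterministic (A : WKAutomaton T Q) : Prop :=
  ∀ (q : Q) (w x₁ y₁ w₁ x₂ y₂ w₂ : List T) (q₁ q₂ : Q),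
    w = x₁ ++ w₁ ++ y₁ → q₁ ∈ A.δ q x₁ y₁ →
    w = x₂ ++ w₂ ++ y₂ → q₂ ∈ A.δ q x₂ y₂ →
    x₁ = x₂ ∧ y₁ = y₂ ∧ w₁ = w₂ ∧ q₁ = q₂

/-- `A` is quasi-deterministic: for every configuration `(q,w)`, whenever
`(q,w) ⇒ (p,u)` and `(q,w) ⇒ (r,v)`, it holds that `p = r`. -/
def QuasiDet (A : WKAutomaton T Q) : Prop :=
  ∀ (q : Q) (w : List T) (p r : Q) (u v : List T),
    A.Step (q, w) (p, u) → A.Step (q, w) (r, v) → p = r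

/-- `A` is state-deterministic: for every state `q` there is at most one state `p`
with `p ∈ δ(q,u,v)` for some words `u`, `v`. -/
def StateDet (A : WKAutomaton T Q) : Prop :=
  ∀ (q p₁ p₂ : Q) (u₁ v₁ u₂ v₂ : List T),
    p₁ ∈ A.δ q u₁ v₁ → p₂ ∈ A.δ q u₂ v₂ → p₁ = p₂

/-- `A` is stateless: `Q = F = {q₀}`. -/
def Stateless (A : WKAutomaton T Q) : Prop :=
  (∀ q : Q, q = A.q0) ∧ A.F = {A.q0}

/-- `A` is all-final: `Q = F`. -/
def AllFinal (A : WKAutomaton T Q) : Prop := A.F = Set.univ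

/-- `A` is simple: at most one head reads in each step. -/
def Simple (A : WKAutomaton T Q) : Prop :=
  ∀ (q : Q) (u v : List T), (A.δ q u v).Nonempty → u = [] ∨ v = []

/-- `A` is 1-limited: exactly one letter is read in each step. -/
def OneLimited (A : WKAutomaton T Q) : Prop :=
  ∀ (q : Q) (u v : List T), (A.δ q u v).Nonempty →
    (u = [] ∧ v.length = 1) ∨ (u.length = 1 ∧ v = [])

end WKAutomaton

/-- Equality of languages modulo the empty word. -/
def EqModLambda {T : Type} (L₁ L₂ : Set (List T)) : Prop :=
  ∀ w : List T, w ≠ [] → (w ∈ L₁ ↔ w ∈ L₂)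

/-- `L` is accepted (modulo the empty word) by some sensing 5'→3' WK automaton
with a finite state set satisfying the property `P`. -/
def AcceptsWith (T : Type) (P : ∀ Q : Type, WKAutomaton T Q → Prop)
    (L : Set (List T)) : Prop :=
  ∃ (Q : Type) (_ : Finite Q) (A : WKAutomaton T Q), P Q A ∧ EqModLambda A.Lang L

/-- The language `{ aⁿbⁿ : n ≥ 0 }`. -/
def Lanbn : Set (List Letter) :=
  {w | ∃ n : ℕ, w = List.replicate n a ++ List.replicate n b}

/-- The language `{ aⁿb²ⁿ : n ≥ 0 }`. -/
def Lanb2n : Set (List Letter) :=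
  {w | ∃ n : ℕ, w = List.replicate n a ++ List.replicate (2 * n) b}


/-! ### auxiliary list lemmas -/

/-- `ww k l = aᵏbˡ`. -/
def ww (k l : ℕ) : List Letter := List.replicate k a ++ List.replicate l b

lemma ww_decomp (x k l y : ℕ) :
    ww (x + k) (l + y) = List.replicate x a ++ ww k l ++ List.replicate y b := by
  simp only [ww, List.replicate_add, List.append_assoc]

lemma ww_length (k l : ℕ) : (ww k l).length = k + l := by simp [ww]

lemma ww_eq_nil_iff (k l : ℕ) : ww k l = [] ↔ k = 0 ∧ l = 0 := by
  constructor
  · intro h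
    have := congrArg List.length h
    simp [ww] at this
    omega
  · rintro ⟨rfl, rfl⟩; rfl

lemma ww_inj {k l k' l' : ℕ} (h : ww k l = ww k' l') : k = k' ∧ l = l' := by
  have ha := congrArg (List.count a) h
  have hb := congrArg (List.count b) h
  simp [ww, List.count_append, List.count_replicate] at ha hb
  exact ⟨ha, hb⟩

lemma split3 {x u y : List Letter} {k l : ℕ} (h : x ++ u ++ y = ww k l)
    (hx : x.length ≤ k) (hy : y.length ≤ l) :
    x = List.replicate x.length a ∧ y = List.replicate y.length b ∧
      u = ww (k - x.length) (l - y.length) := by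
  have hxa : x = List.replicate x.length a := by
    have h1 : x = (ww k l).take x.length := by
      rw [← h, List.append_assoc, List.take_left]
    have h2 : (ww k l).take x.length = List.replicate x.length a := by
      rw [ww, List.take_append, List.take_replicate,
        List.length_replicate]
      have e1 : x.length - k = 0 := by omega
      rw [e1, Nat.min_eq_left hx, List.take_zero, List.append_nil]
    exact h1.trans h2
  have hyb : y = List.replicate y.length b := by
    have hlen : (x ++ u).length = k + l - y.length := by
      have := congrArg List.length h
      simp [ww] at this
      simp
      omega
    have h1 : y = (ww k l).drop (k + l - y.length) := by
      rw [← h, ← hlen, List.drop_left]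
    have h2 : (ww k l).drop (k + l - y.length) = List.replicate y.length b := by
      rw [ww, List.drop_append, List.length_replicate,
        List.drop_replicate, List.drop_replicate]
      have e1 : k - (k + l - y.length) = 0 := by omega
      have e2 : l - (k + l - y.length - k) = y.length := by omega
      rw [e1, e2, List.replicate_zero, List.nil_append]
    exact h1.trans h2
  refine ⟨hxa, hyb, ?_⟩
  have hdec : ww k l = List.replicate x.length a ++ ww (k - x.length) (l - y.length)
      ++ List.replicate y.length b := by
    have := ww_decomp x.length (k - x.length) (l - y.length) y.length
    rw [← this]
    congr 1 <;> omega
  rw [hdec, ← hxa, ← hyb] at h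
  exact List.append_cancel_left (List.append_cancel_right h)

/-! ### The nondeterministic automaton accepting `{aⁿbⁿ} ∪ {aⁿb²ⁿ}` -/

def Mwk : WKAutomaton Letter (Fin 3) where
  q0 := 0
  F := {1, 2}
  δ := fun q x y =>
    {p | (q = 0 ∧ x = [a] ∧ y = [b] ∧ p = 1) ∨ (q = 0 ∧ x = [a] ∧ y = [b, b] ∧ p = 2) ∨
      (q = 1 ∧ x = [a] ∧ y = [b] ∧ p = 1) ∨ (q = 2 ∧ x = [a] ∧ y = [b, b] ∧ p = 2)}
  finite_delta := by
    apply Set.Finite.subset (Set.toFinite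
      {((0 : Fin 3), ([a], [b])), ((0 : Fin 3), ([a], [b, b])),
        ((1 : Fin 3), ([a], [b])), ((2 : Fin 3), ([a], [b, b]))})
    rintro ⟨q, x, y⟩ ⟨p, hp⟩
    rcases hp with ⟨h1, h2, h3, h4⟩ | ⟨h1, h2, h3, h4⟩ | ⟨h1, h2, h3, h4⟩ | ⟨h1, h2, h3, h4⟩ <;>
      subst h1 <;> subst h2 <;> subst h3 <;> simp

lemma Mwk_loop1 (n : ℕ) :
    Relation.ReflTransGen Mwk.Step (1, ww n n) (1, []) := by
  induction n with
  | zero => exact Relation.ReflTransGen.refl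
  | succ n ih =>
      refine Relation.ReflTransGen.head ⟨[a], [b], ?_, ?_⟩ ih
      · show ww (n + 1) (n + 1) = [a] ++ ww n n ++ [b]
        have := ww_decomp 1 n n 1
        simpa [Nat.add_comm] using this
      · exact Or.inr (Or.inr (Or.inl ⟨rfl, rfl, rfl, rfl⟩))

lemma Mwk_loop2 (n : ℕ) :
    Relation.ReflTransGen Mwk.Step (2, ww n (2 * n)) (2, []) := by
  induction n with
  | zero => exact Relation.ReflTransGen.refl
  | succ n ih =>
      refine Relation.ReflTransGen.head ⟨[a], [b, b], ?_, ?_⟩ ih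
      · show ww (n + 1) (2 * (n + 1)) = [a] ++ ww n (2 * n) ++ [b, b]
        have := ww_decomp 1 n (2 * n) 2
        have e : 2 * (n + 1) = 2 * n + 2 := by ring
        rw [e]
        simpa [Nat.add_comm] using this
      · exact Or.inr (Or.inr (Or.inr ⟨rfl, rfl, rfl, rfl⟩))

lemma Mwk_accept1 (n : ℕ) (hn : n ≠ 0) : ww n n ∈ Mwk.Lang := by
  obtain ⟨m, rfl⟩ : ∃ m, n = m + 1 := ⟨n - 1, by omega⟩
  refine ⟨1, Or.inl rfl, ?_⟩
  refine Relation.ReflTransGen.head ⟨[a], [b], ?_, ?_⟩ (Mwk_loop1 m)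
  · show ww (m + 1) (m + 1) = [a] ++ ww m m ++ [b]
    have := ww_decomp 1 m m 1
    simpa [Nat.add_comm] using this
  · exact Or.inl ⟨rfl, rfl, rfl, rfl⟩

lemma Mwk_accept2 (n : ℕ) (hn : n ≠ 0) : ww n (2 * n) ∈ Mwk.Lang := by
  obtain ⟨m, rfl⟩ : ∃ m, n = m + 1 := ⟨n - 1, by omega⟩
  refine ⟨2, Or.inr rfl, ?_⟩
  refine Relation.ReflTransGen.head ⟨[a], [b, b], ?_, ?_⟩ (Mwk_loop2 m)
  · show ww (m + 1) (2 * (m + 1)) = [a] ++ ww m (2 * m) ++ [b, b]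
    have e : 2 * (m + 1) = 2 * m + 2 := by ring
    rw [e]
    have := ww_decomp 1 m (2 * m) 2
    simpa [Nat.add_comm] using this
  · exact Or.inr (Or.inl ⟨rfl, rfl, rfl, rfl⟩)

lemma Mwk_inv (cfg : Fin 3 × List Letter) (qf : Fin 3)
    (h : Relation.ReflTransGen Mwk.Step cfg (qf, [])) (hqf : qf ∈ Mwk.F) :
    (cfg.1 = 1 → ∃ n, cfg.2 = ww n n) ∧ (cfg.1 = 2 → ∃ n, cfg.2 = ww n (2 * n)) ∧
      (cfg.1 = 0 → cfg.2 ∈ Lanbn ∪ Lanb2n) := by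
  induction h using Relation.ReflTransGen.head_induction_on with
  | refl =>
      refine ⟨fun _ => ⟨0, rfl⟩, fun _ => ⟨0, rfl⟩, fun h0 => ?_⟩
      rcases hqf with h1 | h2
      · exact absurd (h0.symm.trans h1) (by decide)
      · exact absurd (h0.symm.trans h2) (by decide)
  | head hstep htail ih =>
      obtain ⟨x, y, hw, hp⟩ := hstep
      rcases hp with ⟨h1, h2, h3, h4⟩ | ⟨h1, h2, h3, h4⟩ | ⟨h1, h2, h3, h4⟩ | ⟨h1, h2, h3, h4⟩ <;>
        subst h2 <;> subst h3 <;>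
        refine ⟨fun hq => ?_, fun hq => ?_, fun hq => ?_⟩ <;>
        first
          | (exact absurd (hq.symm.trans h1) (by decide))
          | skip
      · -- cfg'.1 = 0, step to state 1
        obtain ⟨n, hn⟩ := ih.1 h4
        refine Or.inl ⟨n + 1, ?_⟩
        rw [hw, hn]
        have := ww_decomp 1 n n 1
        simpa [ww, Nat.add_comm] using this.symm
      · -- cfg'.1 = 0, to state 2
        obtain ⟨n, hn⟩ := ih.2.1 h4
        refine Or.inr ⟨n + 1, ?_⟩
        rw [hw, hn]
        have e : 2 * (n + 1) = 2 * n + 2 := by ring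
        have := ww_decomp 1 n (2 * n) 2
        rw [Nat.add_comm 1 n, ← e] at this
        simpa [ww] using this.symm
      · -- state 1
        obtain ⟨n, hn⟩ := ih.1 h4
        refine ⟨n + 1, ?_⟩
        rw [hw, hn]
        have := ww_decomp 1 n n 1
        simpa [Nat.add_comm] using this.symm
      · -- state 2
        obtain ⟨n, hn⟩ := ih.2.1 h4
        refine ⟨n + 1, ?_⟩
        rw [hw, hn]
        have e : 2 * (n + 1) = 2 * n + 2 := by ring
        have := ww_decomp 1 n (2 * n) 2
        rw [Nat.add_comm 1 n, ← e] at this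
        simpa using this.symm

lemma Mwk_lang : EqModLambda Mwk.Lang (Lanbn ∪ Lanb2n) := by
  intro w hw
  constructor
  · rintro ⟨qf, hqf, hrun⟩
    exact (Mwk_inv (Mwk.q0, w) qf hrun hqf).2.2 rfl
  · rintro (⟨n, rfl⟩ | ⟨n, rfl⟩)
    · have hn : n ≠ 0 := by rintro rfl; exact hw rfl
      exact Mwk_accept1 n hn
    · have hn : n ≠ 0 := by rintro rfl; exact hw rfl
      exact Mwk_accept2 n hn

/-! ### Impossibility for quasi-deterministic automata -/

section Impossible

variable {Q : Type}

lemma exists_bound (A : WKAutomaton Letter Q) :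
    ∃ c : ℕ, 1 ≤ c ∧ ∀ q x y, (A.δ q x y).Nonempty → x.length ≤ c ∧ y.length ≤ c := by
  have hfin : ((fun t : Q × List Letter × List Letter => t.2.1.length ⊔ t.2.2.length) ''
      {t | (A.δ t.1 t.2.1 t.2.2).Nonempty}).Finite := A.finite_delta.image _
  obtain ⟨c₀, hc₀⟩ := hfin.bddAbove
  refine ⟨c₀ + 1, by omega, fun q x y hne => ?_⟩
  have := hc₀ ⟨(q, x, y), hne, rfl⟩
  simp only [upperBounds, Set.mem_setOf_eq] at this
  constructor <;> [have h1 := le_trans (le_sup_left : x.length ≤ _) this;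
    have h1 := le_trans (le_sup_right : y.length ≤ _) this] <;> omega

variable (A : WKAutomaton Letter Q) (c : ℕ)

open Classical in
/-- the canonical next state from `q` (on large configurations). -/
noncomputable def nextState (q : Q) : Q :=
  if h : ∃ p, ∃ i ≤ c, ∃ j ≤ c, p ∈ A.δ q (List.replicate i a) (List.replicate j b)
  then h.choose else A.q0

variable {A c}

lemma nextState_eq (hqd : A.QuasiDet) {q p : Q} {i j : ℕ} (hi : i ≤ c) (hj : j ≤ c)
    (hp : p ∈ A.δ q (List.replicate i a) (List.replicate j b)) : p = nextState A c q := by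
  have hex : ∃ p, ∃ i ≤ c, ∃ j ≤ c, p ∈ A.δ q (List.replicate i a) (List.replicate j b) :=
    ⟨p, i, hi, j, hj, hp⟩
  rw [nextState, dif_pos hex]
  obtain ⟨i', hi', j', hj', hp'⟩ := hex.choose_spec
  -- both are steps from (q, ww (2c) (2c))
  have mk : ∀ (i j : ℕ), i ≤ c → j ≤ c →
      ww (2 * c) (2 * c) = List.replicate i a ++ ww (2 * c - i) (2 * c - j) ++
        List.replicate j b := by
    intro i j hi hj
    have := ww_decomp i (2 * c - i) (2 * c - j) j
    rw [← this]
    congr 1 <;> omega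
  exact hqd q (ww (2 * c) (2 * c)) p hex.choose (ww (2 * c - i) (2 * c - j))
    (ww (2 * c - i') (2 * c - j'))
    ⟨_, _, mk i j hi hj, hp⟩ ⟨_, _, mk i' j' hi' hj', hp'⟩

variable (A c) in
/-- the forced state sequence. -/
noncomputable def stateSeq (r : ℕ) : Q := (nextState A c)^[r] A.q0

lemma stateSeq_succ (r : ℕ) : stateSeq A c (r + 1) = nextState A c (stateSeq A c r) :=
  Function.iterate_succ_apply' _ _ _

variable (A c) in
/-- at position `r` the automaton can read `i` letters `a` and `j` letters `b`. -/
def EdgeP (r i j : ℕ) : Prop :=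
  i ≤ c ∧ j ≤ c ∧
    stateSeq A c (r + 1) ∈ A.δ (stateSeq A c r) (List.replicate i a) (List.replicate j b)

lemma splice (R : ℕ) (ea eb : ℕ → ℕ) (he : ∀ r < R, EdgeP A c r (ea r) (eb r))
    {k l : ℕ} {qf : Q} (hqf : qf ∈ A.F)
    (htail : Relation.ReflTransGen A.Step (stateSeq A c R, ww k l) (qf, [])) :
    ww ((∑ r ∈ Finset.range R, ea r) + k) ((∑ r ∈ Finset.range R, eb r) + l) ∈ A.Lang := by
  suffices H : ∀ t ≤ R, Relation.ReflTransGen A.Step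
      (stateSeq A c (R - t),
        ww ((∑ r ∈ Finset.Ico (R - t) R, ea r) + k) ((∑ r ∈ Finset.Ico (R - t) R, eb r) + l))
      (qf, []) by
    have := H R le_rfl
    rw [Nat.sub_self] at this
    exact ⟨qf, hqf, by rw [Finset.range_eq_Ico]; exact this⟩
  intro t ht
  induction t with
  | zero =>
      simp only [Nat.sub_zero, Finset.Ico_self, Finset.sum_empty, Nat.zero_add]
      exact htail
  | succ t ih =>
      have ht' : t ≤ R := by omega
      have ih' := ih ht'
      have hs : R - t = (R - (t + 1)) + 1 := by omega
      rw [hs] at ih'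
      set s := R - (t + 1) with hsdef
      have hsR : s < R := by omega
      obtain ⟨hi, hj, hmem⟩ := he s hsR
      refine Relation.ReflTransGen.head ?_ ih'
      refine ⟨List.replicate (ea s) a, List.replicate (eb s) b, ?_, hmem⟩
      show ww _ _ = _
      have hsum1 : (∑ r ∈ Finset.Ico s R, ea r) = ea s + ∑ r ∈ Finset.Ico (s + 1) R, ea r :=
        Finset.sum_eq_sum_Ico_succ_bot hsR _
      have hsum2 : (∑ r ∈ Finset.Ico s R, eb r) = eb s + ∑ r ∈ Finset.Ico (s + 1) R, eb r :=
        Finset.sum_eq_sum_Ico_succ_bot hsR _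
      rw [hsum1, hsum2]
      have hd := ww_decomp (ea s) ((∑ r ∈ Finset.Ico (s + 1) R, ea r) + k)
        ((∑ r ∈ Finset.Ico (s + 1) R, eb r) + l) (eb s)
      rw [← hd]
      congr 1 <;> omega

lemma run_decomp (hqd : A.QuasiDet) (hc1 : 1 ≤ c)
    (hc : ∀ q x y, (A.δ q x y).Nonempty → x.length ≤ c ∧ y.length ≤ c)
    {cfg : Q × List Letter} {qf : Q}
    (hrun : Relation.ReflTransGen A.Step cfg (qf, [])) :
    ∀ s k₀ l₀ : ℕ, cfg = (stateSeq A c s, ww k₀ l₀) →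
    ∃ (R : ℕ) (ea eb : ℕ → ℕ) (k l : ℕ), s ≤ R ∧
      (∀ r, s ≤ r → r < R → EdgeP A c r (ea r) (eb r)) ∧
      (∑ r ∈ Finset.Ico s R, ea r) + k = k₀ ∧ (∑ r ∈ Finset.Ico s R, eb r) + l = l₀ ∧
      (k < c ∨ l < c) ∧
      Relation.ReflTransGen A.Step (stateSeq A c R, ww k l) (qf, []) := by
  induction hrun using Relation.ReflTransGen.head_induction_on with
  | refl =>
      intro s k₀ l₀ hcfg
      have h1 : qf = stateSeq A c s := congrArg Prod.fst hcfg
      have h2 : ww k₀ l₀ = [] := (congrArg Prod.snd hcfg).symm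
      obtain ⟨rfl, rfl⟩ := (ww_eq_nil_iff _ _).mp h2
      refine ⟨s, fun _ => 0, fun _ => 0, 0, 0, le_rfl,
        fun r hr1 hr2 => absurd (hr1.trans_lt hr2) (lt_irrefl s),
        by simp, by simp, Or.inl (by omega), ?_⟩
      rw [h2, ← h1]
  | head hstep htail ih =>
      intro s k₀ l₀ hcfg
      by_cases hsmall : k₀ < c ∨ l₀ < c
      · refine ⟨s, fun _ => 0, fun _ => 0, k₀, l₀, le_rfl, fun r hr1 hr2 => absurd (hr1.trans_lt hr2) (lt_irrefl s),
          by simp, by simp, hsmall, ?_⟩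
        rw [← hcfg]
        exact htail.head hstep
      · push_neg at hsmall
        obtain ⟨hk₀, hl₀⟩ := hsmall
        obtain ⟨x, y, hw, hp⟩ := hstep
        rw [hcfg] at hw hp
        simp only at hw hp
        have hlen := hc _ _ _ ⟨_, hp⟩
        obtain ⟨hxa, hyb, hu⟩ := split3 hw.symm (le_trans hlen.1 hk₀) (le_trans hlen.2 hl₀)
        rw [hxa, hyb] at hp
        have hnext := nextState_eq hqd hlen.1 hlen.2 hp
        rw [← stateSeq_succ] at hnext
        rename_i srcCfg midCfg
        have hmid : midCfg = (stateSeq A c (s + 1), ww (k₀ - x.length) (l₀ - y.length)) := by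
          exact Prod.ext hnext hu
        obtain ⟨R, ea, eb, k, l, hsR, hedge, hsa, hsb, hsm, htail'⟩ := ih (s + 1) _ _ hmid
        have hsR' : s < R := by omega
        refine ⟨R, Function.update ea s x.length, Function.update eb s y.length, k, l,
          by omega, ?_, ?_, ?_, hsm, htail'⟩
        · intro r hr1 hr2
          rcases eq_or_lt_of_le hr1 with rfl | hlt
          · rw [Function.update_self, Function.update_self]
            refine ⟨hlen.1, hlen.2, ?_⟩
            rw [← hnext]
            exact hp
          · rw [Function.update_of_ne (by omega), Function.update_of_ne (by omega)]
            exact hedge r (by omega) hr2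
        · have hsplit : (∑ r ∈ Finset.Ico s R, Function.update ea s x.length r)
              = x.length + ∑ r ∈ Finset.Ico (s + 1) R, Function.update ea s x.length r :=
            (Finset.sum_eq_sum_Ico_succ_bot hsR' _).trans (by rw [Function.update_self])
          have hcongr : (∑ r ∈ Finset.Ico (s + 1) R, Function.update ea s x.length r)
              = ∑ r ∈ Finset.Ico (s + 1) R, ea r := by
            refine Finset.sum_congr rfl fun r hr => ?_
            rw [Function.update_of_ne]
            have := (Finset.mem_Ico.mp hr).1
            omega
          rw [hsplit, hcongr]
          have hxk : x.length ≤ k₀ := le_trans hlen.1 hk₀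
          omega
        · have hsplit : (∑ r ∈ Finset.Ico s R, Function.update eb s y.length r)
              = y.length + ∑ r ∈ Finset.Ico (s + 1) R, Function.update eb s y.length r :=
            (Finset.sum_eq_sum_Ico_succ_bot hsR' _).trans (by rw [Function.update_self])
          have hcongr : (∑ r ∈ Finset.Ico (s + 1) R, Function.update eb s y.length r)
              = ∑ r ∈ Finset.Ico (s + 1) R, eb r := by
            refine Finset.sum_congr rfl fun r hr => ?_
            rw [Function.update_of_ne]
            have := (Finset.mem_Ico.mp hr).1
            omega
          rw [hsplit, hcongr]
          have hyl : y.length ≤ l₀ := le_trans hlen.2 hl₀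
          omega

lemma member_L (heq : EqModLambda A.Lang (Lanbn ∪ Lanb2n)) {K L : ℕ}
    (h : ww K L ∈ A.Lang) (hne : K + L ≠ 0) : L = K ∨ L = 2 * K := by
  have hw : ww K L ≠ [] := by rw [Ne, ww_eq_nil_iff]; omega
  rcases (heq _ hw).mp h with ⟨n, hn⟩ | ⟨n, hn⟩
  · obtain ⟨h1, h2⟩ := ww_inj (show ww K L = ww n n from hn)
    omega
  · obtain ⟨h1, h2⟩ := ww_inj (show ww K L = ww n (2 * n) from hn)
    omega

lemma accept1_L (heq : EqModLambda A.Lang (Lanbn ∪ Lanb2n)) {n : ℕ} (hn : n ≠ 0) :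
    ww n n ∈ A.Lang := by
  have hw : ww n n ≠ [] := by rw [Ne, ww_eq_nil_iff]; omega
  exact (heq _ hw).mpr (Or.inl ⟨n, rfl⟩)

lemma accept2_L (heq : EqModLambda A.Lang (Lanbn ∪ Lanb2n)) {n : ℕ} (hn : n ≠ 0) :
    ww n (2 * n) ∈ A.Lang := by
  have hw : ww n (2 * n) ≠ [] := by rw [Ne, ww_eq_nil_iff]; omega
  exact (heq _ hw).mpr (Or.inr ⟨n, rfl⟩)

lemma sum_le_mul {R : ℕ} {f : ℕ → ℕ} (hf : ∀ r < R, f r ≤ c) :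
    (∑ r ∈ Finset.range R, f r) ≤ R * c := by
  calc (∑ r ∈ Finset.range R, f r) ≤ ∑ _r ∈ Finset.range R, c :=
        Finset.sum_le_sum (fun r hr => hf r (Finset.mem_range.mp hr))
    _ = R * c := by simp [Finset.sum_const, mul_comm]

lemma edge_unique (hqd : A.QuasiDet) (hc1 : 1 ≤ c)
    (hc : ∀ q x y, (A.δ q x y).Nonempty → x.length ≤ c ∧ y.length ≤ c)
    (heq : EqModLambda A.Lang (Lanbn ∪ Lanb2n)) {r i j i' j' : ℕ}
    (h1 : EdgeP A c r i j) (h2 : EdgeP A c r i' j') : i = i' ∧ j = j' := by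
  set n := c * (r + 2) + 4 * c + 1 with hndef
  have hn0 : n ≠ 0 := by omega
  have hexp : c * (r + 2) = c * r + 2 * c := by ring
  -- run on aⁿbⁿ
  obtain ⟨qf1, hqf1, hrun1⟩ := accept1_L heq hn0
  obtain ⟨R1, ea1, eb1, k1, l1, -, hedge1, hsa1, hsb1, hsm1, htail1⟩ :=
    run_decomp hqd hc1 hc hrun1 0 n n rfl
  rw [← Finset.range_eq_Ico] at hsa1 hsb1
  have hedge1' : ∀ r' < R1, EdgeP A c r' (ea1 r') (eb1 r') := fun r' hr' => hedge1 r' (Nat.zero_le _) hr'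
  have hba1 : (∑ r' ∈ Finset.range R1, ea1 r') ≤ R1 * c :=
    sum_le_mul (fun r' hr' => (hedge1' r' hr').1)
  have hbb1 : (∑ r' ∈ Finset.range R1, eb1 r') ≤ R1 * c :=
    sum_le_mul (fun r' hr' => (hedge1' r' hr').2.1)
  have hRr1 : r < R1 := by
    by_contra hR
    push_neg at hR
    have hmul : R1 * c ≤ r * c := Nat.mul_le_mul_right c hR
    have hcm : r * c = c * r := mul_comm _ _
    omega
  have hrmem1 : r ∈ Finset.range R1 := Finset.mem_range.mpr hRr1
  -- spliced runs for a given edge at position r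
  have spl1 : ∀ i₀ j₀, EdgeP A c r i₀ j₀ → j₀ + ea1 r = i₀ + eb1 r := by
    intro i₀ j₀ h₀
    have he' : ∀ r' < R1, EdgeP A c r' (Function.update ea1 r i₀ r') (Function.update eb1 r j₀ r') := by
      intro r' hr'
      rcases eq_or_ne r' r with rfl | hne
      · rw [Function.update_self, Function.update_self]; exact h₀
      · rw [Function.update_of_ne hne, Function.update_of_ne hne]; exact hedge1' r' hr'
    have hacc := splice R1 _ _ he' hqf1 htail1
    rw [Finset.sum_update_of_mem hrmem1, Finset.sum_update_of_mem hrmem1] at hacc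
    have hea : (∑ r' ∈ Finset.range R1 \ {r}, ea1 r') + ea1 r
        = ∑ r' ∈ Finset.range R1, ea1 r' :=
      (Finset.sum_eq_sum_sdiff_singleton_add hrmem1 _).symm
    have heb : (∑ r' ∈ Finset.range R1 \ {r}, eb1 r') + eb1 r
        = ∑ r' ∈ Finset.range R1, eb1 r' :=
      (Finset.sum_eq_sum_sdiff_singleton_add hrmem1 _).symm
    have hi₀ : i₀ ≤ c := h₀.1
    have hj₀ : j₀ ≤ c := h₀.2.1
    have hear : ea1 r ≤ c := (hedge1' r hRr1).1
    have hebr : eb1 r ≤ c := (hedge1' r hRr1).2.1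
    have hcase := member_L heq hacc (by omega)
    rcases hcase with hcase | hcase <;> omega
  have rel1 := spl1 i j h1
  have rel1' := spl1 i' j' h2
  -- run on aⁿb²ⁿ
  obtain ⟨qf2, hqf2, hrun2⟩ := accept2_L heq hn0
  obtain ⟨R2, ea2, eb2, k2, l2, -, hedge2, hsa2, hsb2, hsm2, htail2⟩ :=
    run_decomp hqd hc1 hc hrun2 0 n (2 * n) rfl
  rw [← Finset.range_eq_Ico] at hsa2 hsb2
  have hedge2' : ∀ r' < R2, EdgeP A c r' (ea2 r') (eb2 r') := fun r' hr' => hedge2 r' (Nat.zero_le _) hr'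
  have hba2 : (∑ r' ∈ Finset.range R2, ea2 r') ≤ R2 * c :=
    sum_le_mul (fun r' hr' => (hedge2' r' hr').1)
  have hbb2 : (∑ r' ∈ Finset.range R2, eb2 r') ≤ R2 * c :=
    sum_le_mul (fun r' hr' => (hedge2' r' hr').2.1)
  have hRr2 : r < R2 := by
    by_contra hR
    push_neg at hR
    have hmul : R2 * c ≤ r * c := Nat.mul_le_mul_right c hR
    have hcm : r * c = c * r := mul_comm _ _
    omega
  have hrmem2 : r ∈ Finset.range R2 := Finset.mem_range.mpr hRr2
  have spl2 : ∀ i₀ j₀, EdgeP A c r i₀ j₀ → j₀ + 2 * ea2 r = 2 * i₀ + eb2 r := by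
    intro i₀ j₀ h₀
    have he' : ∀ r' < R2, EdgeP A c r' (Function.update ea2 r i₀ r') (Function.update eb2 r j₀ r') := by
      intro r' hr'
      rcases eq_or_ne r' r with rfl | hne
      · rw [Function.update_self, Function.update_self]; exact h₀
      · rw [Function.update_of_ne hne, Function.update_of_ne hne]; exact hedge2' r' hr'
    have hacc := splice R2 _ _ he' hqf2 htail2
    rw [Finset.sum_update_of_mem hrmem2, Finset.sum_update_of_mem hrmem2] at hacc
    have hea : (∑ r' ∈ Finset.range R2 \ {r}, ea2 r') + ea2 r
        = ∑ r' ∈ Finset.range R2, ea2 r' :=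
      (Finset.sum_eq_sum_sdiff_singleton_add hrmem2 _).symm
    have heb : (∑ r' ∈ Finset.range R2 \ {r}, eb2 r') + eb2 r
        = ∑ r' ∈ Finset.range R2, eb2 r' :=
      (Finset.sum_eq_sum_sdiff_singleton_add hrmem2 _).symm
    have hi₀ : i₀ ≤ c := h₀.1
    have hj₀ : j₀ ≤ c := h₀.2.1
    have hear : ea2 r ≤ c := (hedge2' r hRr2).1
    have hebr : eb2 r ≤ c := (hedge2' r hRr2).2.1
    have hcase := member_L heq hacc (by omega)
    rcases hcase with hcase | hcase <;> omega
  have rel2 := spl2 i j h1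
  have rel2' := spl2 i' j' h2
  constructor <;> omega

lemma event_raw (hqd : A.QuasiDet) (hc1 : 1 ≤ c)
    (hc : ∀ q x y, (A.δ q x y).Nonempty → x.length ≤ c ∧ y.length ≤ c)
    {n m : ℕ} (hmem : ww n m ∈ A.Lang) :
    ∃ (R : ℕ) (ea eb : ℕ → ℕ) (k l : ℕ), (∀ r < R, EdgeP A c r (ea r) (eb r)) ∧
      (∑ r ∈ Finset.range R, ea r) + k = n ∧ (∑ r ∈ Finset.range R, eb r) + l = m ∧
      (k < c ∨ l < c) ∧ (n ≤ R * c + c ∨ m ≤ R * c + c) ∧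
      (∃ qf ∈ A.F, Relation.ReflTransGen A.Step (stateSeq A c R, ww k l) (qf, [])) := by
  obtain ⟨qf, hqf, hrun⟩ := hmem
  obtain ⟨R, ea, eb, k, l, -, hedge, hsa, hsb, hsm, htail⟩ :=
    run_decomp hqd hc1 hc hrun 0 n m rfl
  rw [← Finset.range_eq_Ico] at hsa hsb
  have hedge' : ∀ r' < R, EdgeP A c r' (ea r') (eb r') :=
    fun r' hr' => hedge r' (Nat.zero_le _) hr'
  have hba : (∑ r' ∈ Finset.range R, ea r') ≤ R * c :=
    sum_le_mul (fun r' hr' => (hedge' r' hr').1)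
  have hbb : (∑ r' ∈ Finset.range R, eb r') ≤ R * c :=
    sum_le_mul (fun r' hr' => (hedge' r' hr').2.1)
  exact ⟨R, ea, eb, k, l, hedge', hsa, hsb, hsm, by omega, qf, hqf, htail⟩

lemma stateSeq_periodic [Finite Q] :
    ∃ P ρ : ℕ, 0 < ρ ∧ ∀ r, P ≤ r → stateSeq A c (r + ρ) = stateSeq A c r := by
  haveI := Fintype.ofFinite Q
  obtain ⟨i, j, hlt, heqq⟩ : ∃ i j : ℕ, i < j ∧ stateSeq A c i = stateSeq A c j := by
    obtain ⟨i, j, hne, heq⟩ := Fintype.exists_ne_map_eq_of_card_lt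
      (fun i : Fin (Fintype.card Q + 1) => stateSeq A c i) (by simp)
    rcases Nat.lt_or_ge (i : ℕ) (j : ℕ) with h | h
    · exact ⟨i, j, h, heq⟩
    · have hji : (j : ℕ) < (i : ℕ) :=
        lt_of_le_of_ne h (fun hh => hne (Fin.ext hh.symm))
      exact ⟨j, i, hji, heq.symm⟩
  refine ⟨i, j - i, by omega, fun r hr => ?_⟩
  obtain ⟨t, rfl⟩ : ∃ t, r = i + t := ⟨r - i, by omega⟩
  have h1 : i + t + (j - i) = t + j := by omega
  rw [h1]
  show (nextState A c)^[t + j] A.q0 = _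
  rw [Function.iterate_add_apply]
  have h2 : (nextState A c)^[j] A.q0 = (nextState A c)^[i] A.q0 := heqq.symm
  rw [h2, ← Function.iterate_add_apply]
  congr 1
  omega

lemma no_quasiDet : ¬ AcceptsWith Letter (fun _ A => A.QuasiDet) (Lanbn ∪ Lanb2n) := by
  rintro ⟨Q, hQ, A, hqd, heq⟩
  obtain ⟨c, hc1, hc⟩ := exists_bound A
  -- edges exist at every position
  have hex : ∀ r, ∃ i j, EdgeP A c r i j := by
    intro r
    have hn0 : c * (r + 2) + 4 * c + 1 ≠ 0 := by omega
    obtain ⟨R, ea, eb, k, l, hedge, hsa, hsb, hsm, hbd, -⟩ :=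
      event_raw hqd hc1 hc (accept1_L heq hn0)
    have hbd' : c * (r + 2) + 4 * c + 1 ≤ R * c + c := by rcases hbd with h | h <;> exact h
    have hexp : c * (r + 2) = c * r + 2 * c := by ring
    have hRr : r < R := by
      by_contra hR
      push_neg at hR
      have hmul : R * c ≤ r * c := Nat.mul_le_mul_right c hR
      have hcm : r * c = c * r := mul_comm _ _
      omega
    exact ⟨ea r, eb r, hedge r hRr⟩
  choose sa sb hse using hex
  have huniq : ∀ r i j, EdgeP A c r i j → i = sa r ∧ j = sb r :=
    fun r i j h => edge_unique hqd hc1 hc heq h (hse r)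
  have hSamono : ∀ r r', r ≤ r' →
      (∑ x ∈ Finset.range r, sa x) ≤ ∑ x ∈ Finset.range r', sa x :=
    fun r r' h => Finset.sum_le_sum_of_subset (Finset.range_subset_range.mpr h)
  have hSbmono : ∀ r r', r ≤ r' →
      (∑ x ∈ Finset.range r, sb x) ≤ ∑ x ∈ Finset.range r', sb x :=
    fun r r' h => Finset.sum_le_sum_of_subset (Finset.range_subset_range.mpr h)
  have hgrow : ∀ (f : ℕ → ℕ), (∀ x, f x ≤ c) → ∀ r d,
      (∑ x ∈ Finset.range (r + d), f x) ≤ (∑ x ∈ Finset.range r, f x) + c * d := by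
    intro f hf r d
    rw [Finset.range_eq_Ico, ← Finset.sum_Ico_consecutive _ (Nat.zero_le r) (Nat.le_add_right r d)]
    have h2 : (∑ x ∈ Finset.Ico r (r + d), f x) ≤ c * d := by
      calc (∑ x ∈ Finset.Ico r (r + d), f x) ≤ ∑ _x ∈ Finset.Ico r (r + d), c :=
            Finset.sum_le_sum (fun x _ => hf x)
        _ = c * d := by simp [Finset.sum_const, Nat.add_sub_cancel_left, mul_comm]
    rw [← Finset.range_eq_Ico]
    omega
  have hSagrow := hgrow sa (fun x => (hse x).1)
  have hSbgrow := hgrow sb (fun x => (hse x).2.1)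
  -- events expressed through the canonical schedule
  have EV : ∀ n m : ℕ, ww n m ∈ A.Lang → ∃ R k l,
      (∑ x ∈ Finset.range R, sa x) + k = n ∧ (∑ x ∈ Finset.range R, sb x) + l = m ∧
      (k < c ∨ l < c) ∧ (n ≤ R * c + c ∨ m ≤ R * c + c) ∧
      ∃ qf ∈ A.F, Relation.ReflTransGen A.Step (stateSeq A c R, ww k l) (qf, []) := by
    intro n m hmem
    obtain ⟨R, ea, eb, k, l, hedge, hsa, hsb, hsm, hbd, htail⟩ := event_raw hqd hc1 hc hmem
    have hsaeq : (∑ x ∈ Finset.range R, ea x) = ∑ x ∈ Finset.range R, sa x :=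
      Finset.sum_congr rfl fun r hr => (huniq r _ _ (hedge r (Finset.mem_range.mp hr))).1
    have hsbeq : (∑ x ∈ Finset.range R, eb x) = ∑ x ∈ Finset.range R, sb x :=
      Finset.sum_congr rfl fun r hr => (huniq r _ _ (hedge r (Finset.mem_range.mp hr))).2
    rw [hsaeq] at hsa
    rw [hsbeq] at hsb
    exact ⟨R, k, l, hsa, hsb, hsm, hbd, htail⟩
  obtain ⟨P, ρ, hρ, hper⟩ := stateSeq_periodic (A := A) (c := c) (Q := Q)
  have hperm : ∀ t r, P ≤ r → stateSeq A c (r + t * ρ) = stateSeq A c r := by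
    intro t
    induction t with
    | zero => simp
    | succ t ih =>
        intro r hr
        have h1 : r + (t + 1) * ρ = (r + t * ρ) + ρ := by ring
        rw [h1, hper _ (by omega), ih r hr]
  -- the first anchor: a run on ww n₀ n₀
  set n₀ := c * P + c * ρ + 7 * c + 1 with hn₀
  obtain ⟨R₁, k₁, l₁, hA1, hA2, hAsm, hAb, qf₁, hqf₁, htail₁⟩ :=
    EV n₀ n₀ (accept1_L heq (by omega))
  have hAb' : n₀ ≤ R₁ * c + c := by rcases hAb with h | h <;> exact h
  have hR₁P : P ≤ R₁ := by
    by_contra h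
    push_neg at h
    have hmul : (R₁ + 1) * c ≤ P * c := Nat.mul_le_mul_right c h
    have e1 : (R₁ + 1) * c = R₁ * c + c := by ring
    have e2 : P * c = c * P := mul_comm _ _
    omega
  have lockA : ∀ t, (∑ x ∈ Finset.range (R₁ + t * ρ), sb x) + l₁
      = (∑ x ∈ Finset.range (R₁ + t * ρ), sa x) + k₁ := by
    intro t
    induction t with
    | zero => simp only [Nat.zero_mul, Nat.add_zero]; omega
    | succ t ih =>
        have hstate := hperm (t + 1) R₁ hR₁P
        have hacc := splice (R₁ + (t + 1) * ρ) sa sb (fun r _ => hse r) hqf₁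
          (by rw [hstate]; exact htail₁)
        have hm1 : (∑ x ∈ Finset.range R₁, sa x) ≤ ∑ x ∈ Finset.range (R₁ + (t + 1) * ρ), sa x :=
          hSamono _ _ (Nat.le_add_right _ _)
        have hpos : ((∑ x ∈ Finset.range (R₁ + (t + 1) * ρ), sa x) + k₁)
            + ((∑ x ∈ Finset.range (R₁ + (t + 1) * ρ), sb x) + l₁) ≠ 0 := by omega
        have hidx : R₁ + (t + 1) * ρ = (R₁ + t * ρ) + ρ := by ring
        have hg : (∑ x ∈ Finset.range (R₁ + (t + 1) * ρ), sb x)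
            ≤ (∑ x ∈ Finset.range (R₁ + t * ρ), sb x) + c * ρ := by
          rw [hidx]; exact hSbgrow _ _
        have hm2 : (∑ x ∈ Finset.range (R₁ + t * ρ), sa x)
            ≤ ∑ x ∈ Finset.range (R₁ + (t + 1) * ρ), sa x := by
          rw [hidx]; exact hSamono _ _ (Nat.le_add_right _ _)
        have hm3 : (∑ x ∈ Finset.range R₁, sa x) ≤ ∑ x ∈ Finset.range (R₁ + t * ρ), sa x :=
          hSamono _ _ (Nat.le_add_right _ _)
        rcases member_L heq hacc hpos with hcase | hcase
        · exact hcase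
        · omega
  -- the second anchor: a run on ww m₀ (2 m₀)
  set m₀ := c * R₁ + c * P + c * ρ + 7 * c + 1 with hm₀
  obtain ⟨R₂, k₂, l₂, hB1, hB2, hBsm, hBb, qf₂, hqf₂, htail₂⟩ :=
    EV m₀ (2 * m₀) (accept2_L heq (by omega))
  have hBb' : m₀ ≤ R₂ * c + c := by rcases hBb with h | h <;> omega
  have hR₂P : P ≤ R₂ := by
    by_contra h
    push_neg at h
    have hmul : (R₂ + 1) * c ≤ P * c := Nat.mul_le_mul_right c h
    have e1 : (R₂ + 1) * c = R₂ * c + c := by ring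
    have e2 : P * c = c * P := mul_comm _ _
    omega
  have hR₂R₁ : R₁ ≤ R₂ := by
    by_contra h
    push_neg at h
    have hmul : (R₂ + 1) * c ≤ R₁ * c := Nat.mul_le_mul_right c h
    have e1 : (R₂ + 1) * c = R₂ * c + c := by ring
    have e2 : R₁ * c = c * R₁ := mul_comm _ _
    omega
  have lockB : ∀ t, (∑ x ∈ Finset.range (R₂ + t * ρ), sb x) + l₂
      = 2 * ((∑ x ∈ Finset.range (R₂ + t * ρ), sa x) + k₂) := by
    intro t
    induction t with
    | zero => simp only [Nat.zero_mul, Nat.add_zero]; omega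
    | succ t ih =>
        have hstate := hperm (t + 1) R₂ hR₂P
        have hacc := splice (R₂ + (t + 1) * ρ) sa sb (fun r _ => hse r) hqf₂
          (by rw [hstate]; exact htail₂)
        have hm1 : (∑ x ∈ Finset.range R₂, sa x) ≤ ∑ x ∈ Finset.range (R₂ + (t + 1) * ρ), sa x :=
          hSamono _ _ (Nat.le_add_right _ _)
        have hpos : ((∑ x ∈ Finset.range (R₂ + (t + 1) * ρ), sa x) + k₂)
            + ((∑ x ∈ Finset.range (R₂ + (t + 1) * ρ), sb x) + l₂) ≠ 0 := by omega
        have hidx : R₂ + (t + 1) * ρ = (R₂ + t * ρ) + ρ := by ring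
        have hg : (∑ x ∈ Finset.range (R₂ + (t + 1) * ρ), sa x)
            ≤ (∑ x ∈ Finset.range (R₂ + t * ρ), sa x) + c * ρ := by
          rw [hidx]; exact hSagrow _ _
        have hm2 : (∑ x ∈ Finset.range (R₂ + t * ρ), sb x)
            ≤ ∑ x ∈ Finset.range (R₂ + (t + 1) * ρ), sb x := by
          rw [hidx]; exact hSbmono _ _ (Nat.le_add_right _ _)
        have hm3 : (∑ x ∈ Finset.range R₂, sa x) ≤ ∑ x ∈ Finset.range (R₂ + t * ρ), sa x :=
          hSamono _ _ (Nat.le_add_right _ _)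
        rcases member_L heq hacc hpos with hcase | hcase
        · omega
        · exact hcase
  -- the partial sums of the schedule are bounded
  have SaB : ∀ t, (∑ x ∈ Finset.range (R₂ + t * ρ), sa x) ≤ c * ρ + k₁ + l₂ := by
    intro t
    set d := (R₂ + t * ρ) - R₁ with hd
    set t₁ := d / ρ + 1 with ht₁
    have hdm := Nat.div_add_mod d ρ
    have hmlt : d % ρ < ρ := Nat.mod_lt d hρ
    have hexp : t₁ * ρ = ρ * (d / ρ) + ρ := by rw [ht₁]; ring
    have hdd : R₁ + d = R₂ + t * ρ := by
      rw [hd]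
      omega
    have hle1 : R₂ + t * ρ ≤ R₁ + t₁ * ρ := by omega
    have hle2 : R₁ + t₁ * ρ ≤ (R₂ + t * ρ) + ρ := by omega
    have hlA := lockA t₁
    have hlB := lockB t
    have hmono : (∑ x ∈ Finset.range (R₂ + t * ρ), sb x)
        ≤ ∑ x ∈ Finset.range (R₁ + t₁ * ρ), sb x := hSbmono _ _ hle1
    have hgr : (∑ x ∈ Finset.range (R₁ + t₁ * ρ), sa x)
        ≤ (∑ x ∈ Finset.range (R₂ + t * ρ), sa x) + c * ρ := by
      calc (∑ x ∈ Finset.range (R₁ + t₁ * ρ), sa x)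
          ≤ ∑ x ∈ Finset.range ((R₂ + t * ρ) + ρ), sa x := hSamono _ _ hle2
        _ ≤ (∑ x ∈ Finset.range (R₂ + t * ρ), sa x) + c * ρ := hSagrow _ _
    omega
  have SbB : ∀ t, (∑ x ∈ Finset.range (R₂ + t * ρ), sb x)
      ≤ 2 * (c * ρ + k₁ + l₂) + 2 * k₂ := by
    intro t
    have := lockB t
    have := SaB t
    omega
  set Z := c * ρ + k₁ + l₂ with hZ
  have SaG : ∀ r, (∑ x ∈ Finset.range r, sa x) ≤ Z := by
    intro r
    have hrle : r ≤ R₂ + r * ρ := by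
      have : r * 1 ≤ r * ρ := Nat.mul_le_mul_left r hρ
      omega
    exact le_trans (hSamono _ _ hrle) (SaB r)
  have SbG : ∀ r, (∑ x ∈ Finset.range r, sb x) ≤ 2 * Z + 2 * k₂ := by
    intro r
    have hrle : r ≤ R₂ + r * ρ := by
      have : r * 1 ≤ r * ρ := Nat.mul_le_mul_left r hρ
      omega
    exact le_trans (hSbmono _ _ hrle) (SbB r)
  -- final contradiction
  set m := Z + (2 * Z + 2 * k₂) + c + 1 with hm
  obtain ⟨R₃, k₃, l₃, hC1, hC2, hCsm, -, -⟩ := EV m (2 * m) (accept2_L heq (by omega))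
  have h1 := SaG R₃
  have h2 := SbG R₃
  omega

end Impossible

/-- The class of languages accepted by quasi-deterministic sensing 5'→3' WK
automata is a proper subset of the class of languages accepted by
(nondeterministic) sensing 5'→3' WK automata; in particular,
`L = { aⁿbⁿ } ∪ { aⁿb²ⁿ }` is accepted by a sensing 5'→3' WK automaton but by
no quasi-deterministic one. -/
theorem quasiDet_proper_subset_of_nondet :
    (∀ (T : Type) (L : Set (List T)),
      AcceptsWith T (fun _ A => A.QuasiDet) L →
      AcceptsWith T (fun _ _ => True) L) ∧
    AcceptsWith Letter (fun _ _ => True) (Lanbn ∪ Lanb2n) ∧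
    ¬ AcceptsWith Letter (fun _ A => A.QuasiDet) (Lanbn ∪ Lanb2n) := by
  refine ⟨?_, ?_, no_quasiDet⟩
  · rintro T L ⟨Q, fQ, A, -, hEq⟩
    exact ⟨Q, fQ, A, trivial, hEq⟩
  · exact ⟨Fin 3, inferInstance, Mwk, trivial, Mwk_lang⟩
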